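/- For the total variation f-divergence given by $f(z)=\tfrac{1}{2}|z-1|$ and a fixed $\epsilon\in(0,1)$, the function $g(\beta):=\inf\{z\in[0,1] : \beta f(z/\beta)+(1-\beta)f((1-z)/(1-\beta))\le\epsilon\}$ satisfies $g(\beta)=\max(0,\beta-\epsilon)$ for all $\beta\in(0,1)$. -/

import Mathlib

/-- for the total-variation f-divergence `f(z) = ½|z-1|` and
`ε ∈ (0,1)`, the worst-case CDF transformation
`g(β) = inf{z ∈ [0,1] : β f(z/β) + (1-β) f((1-z)/(1-β)) ≤ ε}` equals
`max(0, β - ε)` for all `β ∈ (0,1)`. -/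
theorem stmt4 (ε : ℝ) (hε : 0 < ε ∧ ε < 1) (β : ℝ) (hβ : 0 < β ∧ β < 1) :
    sInf {z : ℝ | z ∈ Set.Icc (0 : ℝ) 1 ∧
        β * ((1 / 2) * |z / β - 1|) + (1 - β) * ((1 / 2) * |(1 - z) / (1 - β) - 1|) ≤ ε} =
      max 0 (β - ε) := by
  obtain ⟨hε0, hε1⟩ := hε
  obtain ⟨hβ0, hβ1⟩ := hβ
  have h1β : (0:ℝ) < 1 - β := by linarith
  have hset : {z : ℝ | z ∈ Set.Icc (0 : ℝ) 1 ∧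
        β * ((1 / 2) * |z / β - 1|) + (1 - β) * ((1 / 2) * |(1 - z) / (1 - β) - 1|) ≤ ε}
      = Set.Icc (max 0 (β - ε)) (min 1 (β + ε)) := by
    ext z
    have e1 : β * ((1 / 2) * |z / β - 1|) = (1/2) * |z - β| := by
      have : |z / β - 1| = |z - β| / β := by
        have h : z / β - 1 = (z - β) / β := by field_simp
        rw [h, abs_div, abs_of_pos hβ0]
      rw [this]
      field_simp
    have e2 : (1 - β) * ((1 / 2) * |(1 - z) / (1 - β) - 1|) = (1/2) * |z - β| := by
      have : |(1 - z) / (1 - β) - 1| = |z - β| / (1 - β) := by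
        have h : (1 - z) / (1 - β) - 1 = (β - z) / (1 - β) := by field_simp; ring
        rw [h, abs_div, abs_of_pos h1β, abs_sub_comm]
      rw [this]
      field_simp
    simp only [Set.mem_setOf_eq, Set.mem_Icc, e1, e2, max_le_iff, le_min_iff]
    rw [show (1/2) * |z - β| + (1/2) * |z - β| = |z - β| by ring]
    rw [abs_le]
    constructor
    · rintro ⟨⟨h0, h1⟩, h2, h3⟩
      exact ⟨⟨h0, by linarith⟩, h1, by linarith⟩
    · rintro ⟨⟨h0, h1⟩, h2, h3⟩
      exact ⟨⟨h0, h2⟩, by linarith, by linarith⟩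
  rw [hset, csInf_Icc]
  simp only [max_le_iff, le_min_iff]
  exact ⟨⟨by linarith, by linarith⟩, by linarith, by linarith⟩
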